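/- Let u : ℝ≥0 → ℝ≥0 be nondecreasing, doubling and sublinear, let L ≥ 1, and let f : (X,x₀) → (Y,y₀) be a map between pointed metric spaces that is (L,u,x₀)-Lipschitz, (L,u,x₀)-expansive and (u,y₀)-surjective. Let (x_n) be a sequence in X and (σ_n) positive reals with σ_n → ∞ and u(|x_n|)/σ_n → 0. If a sequence (y_n) in Y satisfies d(f(x_n), y_n) ≤ M·σ_n for all n and some M ≥ 0, then there exist a sequence (x'_n) in X and a constant M' ≥ 0 such that d(x_n, x'_n) ≤ M'·σ_n for all n and d(f(x'_n), y_n)/σ_n → 0 as n → ∞. (That is, the induced map between asymptotic cones is surjective.) -/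

import Mathlib

open Filter Topology

/-- For an `O(u)`-bilipschitz equivalence and `u`-admissible cone
data, any sequence in `Y` staying at distance `O(σₙ)` from `(f xₙ)` can be
approximated (to sublinear precision relative to `σₙ`) by the image of a
sequence in the precone of `X`; i.e. the induced map between asymptotic cones
is surjective. -/
theorem sbe_cone_map_surjective
    {X Y : Type*} [MetricSpace X] [MetricSpace Y]
    (u : ℝ → ℝ)
    (hu0 : ∀ r, 0 ≤ r → 0 ≤ u r)
    (humono : MonotoneOn u (Set.Ici 0))
    (hudbl : ∃ C, 1 ≤ C ∧ ∀ r, 0 ≤ r → u (2 * r) ≤ C * u r)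
    (husub : Tendsto (fun r => u r / r) atTop (𝓝 0))
    (L : ℝ) (hL : 1 ≤ L) (x₀ : X) (y₀ : Y) (f : X → Y)
    (hf : ∀ x x', dist (f x) (f x') ≤ L * dist x x' + u (max (dist x x₀) (dist x' x₀)))
    (hfe : ∀ x x', L⁻¹ * dist x x' - u (max (dist x x₀) (dist x' x₀)) ≤ dist (f x) (f x'))
    (hfs : ∀ y : Y, ∃ x : X, dist y (f x) ≤ u (dist y y₀))
    (x : ℕ → X) (σ : ℕ → ℝ) (hσpos : ∀ n, 0 < σ n)
    (hσ : Tendsto σ atTop atTop)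
    (hadm : Tendsto (fun n => u (dist (x n) x₀) / σ n) atTop (𝓝 0))
    (y : ℕ → Y) (M : ℝ) (hM : 0 ≤ M)
    (hy : ∀ n, dist (f (x n)) (y n) ≤ M * σ n) :
    ∃ (x' : ℕ → X) (M' : ℝ), 0 ≤ M' ∧ (∀ n, dist (x n) (x' n) ≤ M' * σ n) ∧
      Tendsto (fun n => dist (f (x' n)) (y n) / σ n) atTop (𝓝 0) := by
  obtain ⟨C, hC1, hC⟩ := hudbl
  have hC0 : (0:ℝ) ≤ C := le_trans zero_le_one hC1
  have hL0 : (0:ℝ) < L := lt_of_lt_of_le one_pos hL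
  -- scaling lemma
  have lemA : ∀ K : ℝ, 1 ≤ K → ∃ C', 0 ≤ C' ∧ ∀ r, 0 ≤ r → u (K * r) ≤ C' * u r := by
    intro K hK
    obtain ⟨k, hk⟩ := pow_unbounded_of_one_lt K (one_lt_two (α := ℝ))
    refine ⟨C ^ k, by positivity, fun r hr => ?_⟩
    have hpow : ∀ j : ℕ, u ((2:ℝ) ^ j * r) ≤ C ^ j * u r := by
      intro j
      induction j with
      | zero => simp
      | succ j ih =>
        have h1 : u ((2:ℝ) ^ (j+1) * r) = u (2 * ((2:ℝ) ^ j * r)) := by ring_nf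
        have h2 : u (2 * ((2:ℝ) ^ j * r)) ≤ C * u ((2:ℝ) ^ j * r) :=
          hC _ (by positivity)
        calc u ((2:ℝ) ^ (j+1) * r) ≤ C * u ((2:ℝ) ^ j * r) := h1 ▸ h2
          _ ≤ C * (C ^ j * u r) := by
              exact mul_le_mul_of_nonneg_left ih hC0
          _ = C ^ (j+1) * u r := by ring
    have h1 : u (K * r) ≤ u ((2:ℝ) ^ k * r) := by
      refine humono (Set.mem_Ici.2 (by positivity)) (Set.mem_Ici.2 (by positivity)) ?_
      exact mul_le_mul_of_nonneg_right hk.le hr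
    exact h1.trans (hpow k)
  -- sum lemma
  have lemB : ∀ a b : ℝ, 0 ≤ a → 0 ≤ b → u (a + b) ≤ C * (u a + u b) := by
    intro a b ha hb
    have hmax : 0 ≤ max a b := le_trans ha (le_max_left _ _)
    have h1 : u (a + b) ≤ u (2 * max a b) := by
      refine humono (Set.mem_Ici.2 (by positivity)) (Set.mem_Ici.2 (by positivity)) ?_
      rcases le_total a b with h | h
      · rw [max_eq_right h]; linarith
      · rw [max_eq_left h]; linarith
    have h2 : u (2 * max a b) ≤ C * u (max a b) := hC _ hmax
    have h3 : u (max a b) ≤ u a + u b := by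
      rcases le_total a b with h | h
      · rw [max_eq_right h]; linarith [hu0 a ha]
      · rw [max_eq_left h]; linarith [hu0 b hb]
    calc u (a + b) ≤ C * u (max a b) := h1.trans h2
      _ ≤ C * (u a + u b) := mul_le_mul_of_nonneg_left h3 hC0
  -- lemC : u (K σ n) / σ n → 0
  have lemC : ∀ K : ℝ, 0 ≤ K → Tendsto (fun n => u (K * σ n) / σ n) atTop (𝓝 0) := by
    intro K hK
    set K' := max K 1 with hK'def
    have hK'1 : (1:ℝ) ≤ K' := le_max_right _ _
    have hK'0 : (0:ℝ) < K' := lt_of_lt_of_le one_pos hK'1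
    have h1 : Tendsto (fun n => K' * σ n) atTop atTop := hσ.const_mul_atTop hK'0
    have h2 : Tendsto (fun n => u (K' * σ n) / (K' * σ n)) atTop (𝓝 0) := husub.comp h1
    have h3 : Tendsto (fun n => K' * (u (K' * σ n) / (K' * σ n))) atTop (𝓝 0) := by
      simpa using h2.const_mul K'
    refine tendsto_of_tendsto_of_tendsto_of_le_of_le tendsto_const_nhds h3 ?_ ?_
    · intro n
      have := hσpos n
      have h4 : 0 ≤ u (K * σ n) := hu0 _ (by positivity)
      positivity
    · intro n
      have hσn := hσpos n
      have heq : K' * (u (K' * σ n) / (K' * σ n)) = u (K' * σ n) / σ n := by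
        field_simp
      show u (K * σ n) / σ n ≤ K' * (u (K' * σ n) / (K' * σ n))
      rw [heq]
      have hle : u (K * σ n) ≤ u (K' * σ n) := by
        refine humono (Set.mem_Ici.2 (by positivity)) (Set.mem_Ici.2 (by positivity)) ?_
        exact mul_le_mul_of_nonneg_right (le_max_left _ _) hσn.le
      gcongr
  -- boundedness of convergent sequences
  have bdd : ∀ a : ℕ → ℝ, Tendsto a atTop (𝓝 0) → ∃ K, 0 ≤ K ∧ ∀ n, a n ≤ K := by
    intro a ha
    obtain ⟨K, hK⟩ := ha.bddAbove_range
    exact ⟨max K 0, le_max_right _ _, fun n =>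
      le_trans (hK (Set.mem_range_self n)) (le_max_left _ _)⟩
  -- choose the approximating sequence
  choose x' hx' using fun n => hfs (y n)
  set D := dist (f x₀) y₀ with hD
  have hD0 : 0 ≤ D := dist_nonneg
  have hyb : ∀ n, dist (y n) y₀
      ≤ M * σ n + (L * dist (x n) x₀ + (u (dist (x n) x₀) + D)) := by
    intro n
    have t1 : dist (y n) y₀ ≤ dist (y n) (f (x n)) + dist (f (x n)) (f x₀) + dist (f x₀) y₀ :=
      dist_triangle4 _ _ _ _
    have t2 : dist (y n) (f (x n)) ≤ M * σ n := by rw [dist_comm]; exact hy n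
    have t3 : dist (f (x n)) (f x₀) ≤ L * dist (x n) x₀ + u (dist (x n) x₀) := by
      simpa [dist_self, max_eq_left (dist_nonneg : (0:ℝ) ≤ dist (x n) x₀)] using hf (x n) x₀
    linarith
  obtain ⟨C', hC'0, hC'⟩ := lemA L hL
  have hub : ∀ n, u (dist (y n) y₀) ≤ C * u (M * σ n) + C ^ 2 * C' * u (dist (x n) x₀)
      + C ^ 3 * u (u (dist (x n) x₀)) + C ^ 3 * u D := by
    intro n
    have d0 : (0:ℝ) ≤ dist (x n) x₀ := dist_nonneg
    have u0 : 0 ≤ u (dist (x n) x₀) := hu0 _ d0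
    have s0 : 0 < σ n := hσpos n
    have h1 : u (dist (y n) y₀)
        ≤ u (M * σ n + (L * dist (x n) x₀ + (u (dist (x n) x₀) + D))) :=
      humono (Set.mem_Ici.2 dist_nonneg) (Set.mem_Ici.2 (by positivity)) (hyb n)
    have h2 := lemB (M * σ n) (L * dist (x n) x₀ + (u (dist (x n) x₀) + D))
      (by positivity) (by positivity)
    have h3 := lemB (L * dist (x n) x₀) (u (dist (x n) x₀) + D) (by positivity) (by positivity)
    have h4 := lemB (u (dist (x n) x₀)) D u0 hD0
    have h5 := hC' _ d0
    have hstep : u (dist (y n) y₀)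
        ≤ C * (u (M * σ n) + C * (u (L * dist (x n) x₀)
            + C * (u (u (dist (x n) x₀)) + u D))) := by
      calc u (dist (y n) y₀)
          ≤ C * (u (M * σ n) + u (L * dist (x n) x₀ + (u (dist (x n) x₀) + D))) := h1.trans h2
        _ ≤ C * (u (M * σ n) + C * (u (L * dist (x n) x₀) + u (u (dist (x n) x₀) + D))) :=
            mul_le_mul_of_nonneg_left (add_le_add_right h3 _) hC0
        _ ≤ C * (u (M * σ n) + C * (u (L * dist (x n) x₀)
              + C * (u (u (dist (x n) x₀)) + u D))) :=
            mul_le_mul_of_nonneg_left (add_le_add le_rfl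
              (mul_le_mul_of_nonneg_left (add_le_add le_rfl h4) hC0)) hC0
    have h6 : C ^ 2 * u (L * dist (x n) x₀) ≤ C ^ 2 * (C' * u (dist (x n) x₀)) :=
      mul_le_mul_of_nonneg_left h5 (by positivity)
    nlinarith [hstep, h6]
  -- the key tendsto : u(|y n|)/σ n → 0
  have hmain : Tendsto (fun n => u (dist (y n) y₀) / σ n) atTop (𝓝 0) := by
    have t1 : Tendsto (fun n => C * (u (M * σ n) / σ n)) atTop (𝓝 0) := by
      simpa using (lemC M hM).const_mul C
    have t2 : Tendsto (fun n => C ^ 2 * C' * (u (dist (x n) x₀) / σ n)) atTop (𝓝 0) := by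
      simpa using hadm.const_mul (C ^ 2 * C')
    have t3 : Tendsto (fun n => u (u (dist (x n) x₀)) / σ n) atTop (𝓝 0) := by
      have h1 := lemC 1 zero_le_one
      have hev : ∀ᶠ n in atTop, u (dist (x n) x₀) / σ n ≤ 1 :=
        hadm.eventually_le_const one_pos
      refine tendsto_of_tendsto_of_tendsto_of_le_of_le' tendsto_const_nhds h1 ?_ ?_
      · filter_upwards with n
        have := hu0 (u (dist (x n) x₀)) (hu0 _ dist_nonneg)
        have := hσpos n
        positivity
      · filter_upwards [hev] with n hn
        have s0 := hσpos n
        have hle : u (dist (x n) x₀) ≤ σ n := by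
          rw [div_le_one s0] at hn; exact hn
        have : u (u (dist (x n) x₀)) ≤ u (1 * σ n) := by
          rw [one_mul]
          exact humono (Set.mem_Ici.2 (hu0 _ dist_nonneg)) (Set.mem_Ici.2 s0.le) hle
        exact div_le_div_of_nonneg_right this s0.le
    have t3' : Tendsto (fun n => C ^ 3 * (u (u (dist (x n) x₀)) / σ n)) atTop (𝓝 0) := by
      simpa using t3.const_mul (C ^ 3)
    have t4 : Tendsto (fun n => C ^ 3 * (u D / σ n)) atTop (𝓝 0) := by
      have : Tendsto (fun n => (C ^ 3 * u D) / σ n) atTop (𝓝 0) :=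
        tendsto_const_nhds.div_atTop hσ
      simpa [mul_div_assoc] using this
    have hg : Tendsto (fun n => C * (u (M * σ n) / σ n)
        + C ^ 2 * C' * (u (dist (x n) x₀) / σ n)
        + C ^ 3 * (u (u (dist (x n) x₀)) / σ n) + C ^ 3 * (u D / σ n)) atTop (𝓝 0) := by
      simpa using ((t1.add t2).add t3').add t4
    refine tendsto_of_tendsto_of_tendsto_of_le_of_le tendsto_const_nhds hg ?_ ?_
    · intro n
      have := hu0 (dist (y n) y₀) dist_nonneg
      have := hσpos n
      positivity
    · intro n
      have s0 := hσpos n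
      calc u (dist (y n) y₀) / σ n
          ≤ (C * u (M * σ n) + C ^ 2 * C' * u (dist (x n) x₀)
              + C ^ 3 * u (u (dist (x n) x₀)) + C ^ 3 * u D) / σ n :=
            div_le_div_of_nonneg_right (hub n) s0.le
        _ = C * (u (M * σ n) / σ n) + C ^ 2 * C' * (u (dist (x n) x₀) / σ n)
              + C ^ 3 * (u (u (dist (x n) x₀)) / σ n) + C ^ 3 * (u D / σ n) := by ring
  -- bounds valid for all n
  obtain ⟨K₁, hK₁0, hK₁⟩ := bdd _ hmain
  obtain ⟨K₂, hK₂0, hK₂⟩ := bdd _ hadm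
  obtain ⟨K₃, hK₃0, hK₃⟩ := bdd (fun n => 1 / σ n) (tendsto_const_nhds.div_atTop hσ)
  -- sublinearity: affine upper bound with small slope
  have hCpos : (0:ℝ) < C := lt_of_lt_of_le one_pos hC1
  have hEB : ∃ B, 0 ≤ B ∧ ∀ r, 0 ≤ r → u r ≤ (2 * L * C)⁻¹ * r + B := by
    have hev : ∀ᶠ r in atTop, u r / r ≤ (2 * L * C)⁻¹ :=
      husub.eventually_le_const (by positivity)
    obtain ⟨R, hR⟩ := eventually_atTop.mp hev
    have hM1 : (0:ℝ) < max R 1 := lt_of_lt_of_le one_pos (le_max_right _ _)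
    refine ⟨u (max R 1), hu0 _ hM1.le, fun r hr => ?_⟩
    rcases le_total r (max R 1) with h | h
    · have h1 : u r ≤ u (max R 1) := humono (Set.mem_Ici.2 hr) (Set.mem_Ici.2 hM1.le) h
      have h2 : 0 ≤ (2 * L * C)⁻¹ * r := by positivity
      linarith
    · have h1 : R ≤ r := le_trans (le_max_left _ _) h
      have hrpos : 0 < r := lt_of_lt_of_le hM1 h
      have h2 := hR r h1
      rw [div_le_iff₀ hrpos] at h2
      have h3 : 0 ≤ u (max R 1) := hu0 _ hM1.le
      linarith
  obtain ⟨B, hB0, hB⟩ := hEB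
  -- distance bound
  refine ⟨x', 2 * L * (M + K₁ + C * K₂ + C * B * K₃), ?_, ?_, ?_⟩
  · have h1 : 0 ≤ C * K₂ := mul_nonneg hC0 hK₂0
    have h2 : 0 ≤ C * B * K₃ := mul_nonneg (mul_nonneg hC0 hB0) hK₃0
    have h3 : 0 ≤ M + K₁ + C * K₂ + C * B * K₃ := by linarith
    positivity
  · intro n
    have s0 := hσpos n
    have ha0 : (0:ℝ) ≤ dist (x n) x₀ := dist_nonneg
    have hd0 : (0:ℝ) ≤ dist (x n) (x' n) := dist_nonneg
    have e1 := hfe (x n) (x' n)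
    have e2 : dist (f (x n)) (f (x' n)) ≤ M * σ n + u (dist (y n) y₀) := by
      calc dist (f (x n)) (f (x' n))
          ≤ dist (f (x n)) (y n) + dist (y n) (f (x' n)) := dist_triangle _ _ _
        _ ≤ M * σ n + u (dist (y n) y₀) := add_le_add (hy n) (hx' n)
    have e3 : max (dist (x n) x₀) (dist (x' n) x₀) ≤ dist (x n) x₀ + dist (x n) (x' n) := by
      apply max_le (by linarith)
      calc dist (x' n) x₀ ≤ dist (x' n) (x n) + dist (x n) x₀ := dist_triangle _ _ _
        _ = dist (x n) x₀ + dist (x n) (x' n) := by rw [dist_comm (x' n) (x n)]; ring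
    have e4 : u (max (dist (x n) x₀) (dist (x' n) x₀))
        ≤ C * (u (dist (x n) x₀) + u (dist (x n) (x' n))) := by
      refine le_trans ?_ (lemB _ _ ha0 hd0)
      exact humono (Set.mem_Ici.2 (le_trans ha0 (le_max_left _ _)))
        (Set.mem_Ici.2 (by positivity)) e3
    have e5 : u (dist (x n) (x' n)) ≤ (2 * L * C)⁻¹ * dist (x n) (x' n) + B := hB _ hd0
    have e6 : C * u (dist (x n) (x' n))
        ≤ C * ((2 * L * C)⁻¹ * dist (x n) (x' n) + B) := mul_le_mul_of_nonneg_left e5 hC0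
    have e7 : C * ((2 * L * C)⁻¹ * dist (x n) (x' n)) = dist (x n) (x' n) / (2 * L) := by
      field_simp
    have e8 : L⁻¹ * dist (x n) (x' n) - dist (x n) (x' n) / (2 * L)
        = dist (x n) (x' n) / (2 * L) := by
      field_simp
      ring
    have e9 : u (dist (y n) y₀) ≤ K₁ * σ n := by
      have := hK₁ n
      rw [div_le_iff₀ s0] at this
      linarith
    have e10 : u (dist (x n) x₀) ≤ K₂ * σ n := by
      have := hK₂ n
      rw [div_le_iff₀ s0] at this
      linarith
    have e11 : (1:ℝ) ≤ K₃ * σ n := by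
      have := hK₃ n
      rw [div_le_iff₀ s0] at this
      linarith
    have e12 : C * B ≤ C * B * (K₃ * σ n) := by
      have := mul_le_mul_of_nonneg_left e11 (mul_nonneg hC0 hB0)
      linarith
    have e13 : dist (x n) (x' n) / (2 * L)
        ≤ (M + K₁ + C * K₂ + C * B * K₃) * σ n := by
      have hc2 : C * u (dist (x n) x₀) ≤ C * (K₂ * σ n) :=
        mul_le_mul_of_nonneg_left e10 hC0
      nlinarith [e1, e2, e4, e6, e7, e8, e9, e12, hc2]
    rw [div_le_iff₀ (by positivity : (0:ℝ) < 2 * L)] at e13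
    linarith [e13]
  · refine tendsto_of_tendsto_of_tendsto_of_le_of_le tendsto_const_nhds hmain ?_ ?_
    · intro n
      have := hσpos n
      positivity
    · intro n
      have s0 := hσpos n
      have : dist (f (x' n)) (y n) ≤ u (dist (y n) y₀) := by
        rw [dist_comm]; exact hx' n
      exact div_le_div_of_nonneg_right this s0.le
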